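/- For the Dyck code D over {a,b,ā,b̄} (least solution of D = aD*ā ∪ bD*b̄), no proper nonempty suffix of an element of D is a prefix of an element of D*. -/
import Mathlib


inductive D4 : Type | a | b | abar | bbar
deriving DecidableEq

open D4

/-- `C*`: `w` is a concatenation of words of `C`. -/
def InStar (C : Set (List D4)) (w : List D4) : Prop :=
  ∃ l : List (List D4), (∀ u ∈ l, u ∈ C) ∧ l.flatten = w

/-- The Dyck code `D` over `{a, b, ā, b̄}`: the least language with
`D = a D* ā ∪ b D* b̄`. -/
inductive Dyck : List D4 → Prop
  | mk_a (l : List (List D4)) (h : ∀ w ∈ l, Dyck w) :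
      Dyck (a :: (l.flatten ++ [abar]))
  | mk_b (l : List (List D4)) (h : ∀ w ∈ l, Dyck w) :
      Dyck (b :: (l.flatten ++ [bbar]))

/-- The Dyck code as a set of words. -/
def D : Set (List D4) := {w | Dyck w}

def ht : D4 → ℤ
  | D4.a => 1 | D4.b => 1 | D4.abar => -1 | D4.bbar => -1

def bal (w : List D4) : ℤ := (w.map ht).sum

@[simp] lemma bal_nil : bal [] = 0 := rfl
lemma bal_append (u v : List D4) : bal (u ++ v) = bal u + bal v := by simp [bal]
lemma bal_cons (x : D4) (w : List D4) : bal (x :: w) = ht x + bal w := by simp [bal]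

/-- Key property of Dyck words. -/
def Good (w : List D4) : Prop :=
  bal w = 0 ∧ ∀ p s : List D4, w = p ++ s → s ≠ [] → p ≠ [] → 1 ≤ bal p

lemma flat_bal (l : List (List D4)) (h : ∀ u ∈ l, bal u = 0) : bal l.flatten = 0 := by
  induction l with
  | nil => simp
  | cons u t ih =>
    simp only [List.flatten_cons, bal_append]
    rw [h u (by simp), ih (fun v hv => h v (by simp [hv]))]
    ring

lemma flat_prefix : ∀ (l : List (List D4)), (∀ u ∈ l, Good u) →
    ∀ q, q <+: l.flatten → 0 ≤ bal q := by
  intro l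
  induction l with
  | nil =>
    intro h q hq
    simp only [List.flatten_nil, List.prefix_nil] at hq
    simp [hq]
  | cons u t ih =>
    intro h q hq
    simp only [List.flatten_cons] at hq
    rcases (List.prefix_or_prefix_of_prefix hq (List.prefix_append u t.flatten)) with h1 | h1
    · obtain ⟨r, hr⟩ := h1
      rcases eq_or_ne r [] with rfl | hrne
      · rw [List.append_nil] at hr
        subst hr
        rw [(h q (by simp)).1]
      · rcases eq_or_ne q [] with rfl | hqne
        · simp
        · have := (h u (by simp)).2 q r hr.symm hrne hqne
          omega
    · obtain ⟨r, hr⟩ := h1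
      subst hr
      have hr' : r <+: t.flatten := by
        obtain ⟨z, hz⟩ := hq
        rw [List.append_assoc] at hz
        exact ⟨z, List.append_cancel_left hz⟩
      have h0 : bal u = 0 := (h u (by simp)).1
      have := ih (fun v hv => h v (by simp [hv])) r hr'
      rw [bal_append, h0]
      omega

lemma eq_of_append_singleton {p s t : List D4} {x : D4} (hs : s ≠ [])
    (heq : p ++ s = t ++ [x]) : p <+: t := by
  obtain ⟨s', y, rfl⟩ := s.eq_nil_or_concat.resolve_left hs
  rw [List.concat_eq_append, ← List.append_assoc] at heq
  have := List.append_inj' heq rfl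
  exact ⟨s', this.1⟩

lemma dyck_good : ∀ w, Dyck w → Good w := by
  intro w hw
  induction hw with
  | mk_a l h ih =>
    have hbal0 : bal l.flatten = 0 := flat_bal l (fun u hu => (ih u hu).1)
    constructor
    · rw [bal_cons, bal_append, hbal0]
      simp [bal, ht]
    · intro p s heq hs hp
      cases p with
      | nil => exact absurd rfl hp
      | cons x p' =>
        simp only [List.cons_append, List.cons.injEq] at heq
        obtain ⟨rfl, heq2⟩ := heq
        have hpre : p' <+: l.flatten := eq_of_append_singleton hs heq2.symm
        have := flat_prefix l ih p' hpre
        rw [bal_cons]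
        simp only [ht]
        omega
  | mk_b l h ih =>
    have hbal0 : bal l.flatten = 0 := flat_bal l (fun u hu => (ih u hu).1)
    constructor
    · rw [bal_cons, bal_append, hbal0]
      simp [bal, ht]
    · intro p s heq hs hp
      cases p with
      | nil => exact absurd rfl hp
      | cons x p' =>
        simp only [List.cons_append, List.cons.injEq] at heq
        obtain ⟨rfl, heq2⟩ := heq
        have hpre : p' <+: l.flatten := eq_of_append_singleton hs heq2.symm
        have := flat_prefix l ih p' hpre
        rw [bal_cons]
        simp only [ht]
        omega

/-- no proper nonempty suffix of an element of the Dyck code `D`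
is a prefix of an element of `D*`. -/
theorem stmt16 :
    ∀ w ∈ D, ∀ p s : List D4, w = p ++ s → p ≠ [] → s ≠ [] →
      ¬ ∃ z : List D4, InStar D z ∧ s <+: z := by
  rintro w hw p s heq hp hs ⟨z, ⟨l, hl, rfl⟩, hsz⟩
  have hgood := dyck_good w hw
  have hbp : 1 ≤ bal p := hgood.2 p s heq hs hp
  have hw0 : bal w = 0 := hgood.1
  have hbs : bal s ≤ -1 := by
    have := bal_append p s
    rw [← heq, hw0] at this
    omega
  have : 0 ≤ bal s := flat_prefix l (fun u hu => dyck_good u (hl u hu)) s hsz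
  omega
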